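/- For every continuous map υ : [0, 2π] → ℝ³ and every ε > 0 there exists a smooth curve η = (a, b, c) : [0, 2π] → ℝ³ which is Legendrian for the standard contact structure, i.e. c'(t) = b(t)·a'(t) for all t ∈ [0, 2π], and satisfies sup_{t ∈ [0,2π]} |υ(t) − η(t)| ≤ ε (Euclidean norm on ℝ³). -/

import Mathlib

open Real Set

lemma poly_contDiff (p : Polynomial ℝ) : ContDiff ℝ (⊤ : ℕ∞) fun t : ℝ => p.eval t := by
  induction p using Polynomial.induction_on' with
  | add p q hp hq => simpa [Polynomial.eval_add] using hp.add hq
  | monomial n a =>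
      simpa [Polynomial.eval_monomial] using (contDiff_const (c := a)).mul (contDiff_id.pow n)

lemma poly_bound (p : Polynomial ℝ) : ∃ B : ℝ, ∀ s ∈ Icc (0:ℝ) (2*π), |p.eval s| ≤ B := by
  obtain ⟨B, hB⟩ := isCompact_Icc.exists_bound_of_continuousOn
    ((poly_contDiff p).continuous.continuousOn (s := Icc (0:ℝ) (2*π)))
  exact ⟨B, fun s hs => by simpa [Real.norm_eq_abs] using hB s hs⟩

lemma osc_bound (p : Polynomial ℝ) (B ν : ℝ) (hν : 0 < ν)
    (hB : ∀ s ∈ Icc (0:ℝ) (2*π), |p.eval s| ≤ B)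
    (hB' : ∀ s ∈ Icc (0:ℝ) (2*π), |p.derivative.eval s| ≤ B)
    (t : ℝ) (ht : t ∈ Icc (0:ℝ) (2*π)) :
    |∫ s in (0:ℝ)..t, p.eval s * Real.cos (ν * s)| ≤ (2*B + 2*π*B)/ν := by
  have hπ : (0:ℝ) < π := Real.pi_pos
  have h0 : (0:ℝ) ∈ Icc (0:ℝ) (2*π) := by constructor <;> nlinarith
  have hB0 : 0 ≤ B := le_trans (abs_nonneg _) (hB 0 h0)
  have ht0 : 0 ≤ t := ht.1
  have ht2 : t ≤ 2*π := ht.2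
  set v : ℝ → ℝ := fun s => Real.sin (ν * s) / ν with hv_def
  have hv : ∀ s : ℝ, HasDerivAt v (Real.cos (ν * s)) s := by
    intro s
    have h1 : HasDerivAt (fun u : ℝ => Real.sin (ν * u)) (Real.cos (ν * s) * ν) s := by
      simpa [Function.comp_def] using (Real.hasDerivAt_sin (ν * s)).comp s ((hasDerivAt_id s).const_mul ν)
    have := h1.div_const ν
    simpa [mul_div_cancel_right₀ _ hν.ne'] using this
  have hparts := intervalIntegral.integral_mul_deriv_eq_deriv_mul_of_hasDerivAt
    (u := fun s => p.eval s) (v := v) (u' := fun s => p.derivative.eval s)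
    (v' := fun s => Real.cos (ν * s)) (a := 0) (b := t)
    ((poly_contDiff p).continuous.continuousOn)
    (Continuous.continuousOn (by fun_prop))
    (fun s _ => p.hasDerivAt s)
    (fun s _ => hv s)
    (Continuous.intervalIntegrable (poly_contDiff p.derivative).continuous 0 t)
    (Continuous.intervalIntegrable (by fun_prop) 0 t)
  have hsub : uIoc (0:ℝ) t ⊆ Icc (0:ℝ) (2*π) := by
    rw [uIoc_of_le ht0]
    exact fun s hs => ⟨le_of_lt hs.1, le_trans hs.2 ht2⟩
  have hint : ‖∫ s in (0:ℝ)..t, p.derivative.eval s * v s‖ ≤ B / ν * |t - 0| := by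
    apply intervalIntegral.norm_integral_le_of_norm_le_const
    intro s hs
    have h1 : |p.derivative.eval s| ≤ B := hB' s (hsub hs)
    have h2 : |v s| ≤ 1 / ν := by
      rw [hv_def]
      rw [abs_div, abs_of_pos hν]
      gcongr
      exact Real.abs_sin_le_one _
    calc ‖p.derivative.eval s * v s‖ = |p.derivative.eval s| * |v s| := abs_mul _ _
      _ ≤ B * (1/ν) := mul_le_mul h1 h2 (abs_nonneg _) hB0
      _ = B / ν := by ring
  rw [hparts]
  have hvt : |v t| ≤ 1 / ν := by
    rw [hv_def, abs_div, abs_of_pos hν]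
    gcongr
    exact Real.abs_sin_le_one _
  have hv0 : v 0 = 0 := by simp [hv_def]
  rw [hv0]
  have hpt : |p.eval t| ≤ B := hB t ht
  have habs : |p.eval t * v t - p.eval 0 * 0 - ∫ s in (0:ℝ)..t, p.derivative.eval s * v s| ≤
      B * (1/ν) + B / ν * |t - 0| := by
    have h1 : |p.eval t * v t| ≤ B * (1/ν) := by
      rw [abs_mul]; exact mul_le_mul hpt hvt (abs_nonneg _) hB0
    calc |p.eval t * v t - p.eval 0 * 0 - ∫ s in (0:ℝ)..t, p.derivative.eval s * v s|
        ≤ |p.eval t * v t - p.eval 0 * 0| + |∫ s in (0:ℝ)..t, p.derivative.eval s * v s| :=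
          abs_sub _ _
      _ ≤ B * (1/ν) + B / ν * |t - 0| := by
          refine add_le_add ?_ hint
          simpa using h1
  refine habs.trans ?_
  have htabs : |t - 0| ≤ 2*π := by rw [sub_zero, abs_of_nonneg ht0]; exact ht2
  have : B / ν * |t - 0| ≤ B / ν * (2*π) := by
    apply mul_le_mul_of_nonneg_left htabs (by positivity)
  calc B * (1/ν) + B / ν * |t - 0| ≤ B * (1/ν) + B / ν * (2*π) := by linarith
    _ ≤ (2*B + 2*π*B)/ν := by
        rw [← sub_nonneg]
        have h1 : (2*B + 2*π*B)/ν - (B * (1/ν) + B / ν * (2*π)) = B/ν := by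
          field_simp; ring
        rw [h1]
        positivity

set_option maxHeartbeats 1600000 in
theorem legendrian_approximation_of_continuous_curve
    (x y z : ℝ → ℝ)
    (hx : ContinuousOn x (Icc 0 (2 * π)))
    (hy : ContinuousOn y (Icc 0 (2 * π)))
    (hz : ContinuousOn z (Icc 0 (2 * π)))
    (ε : ℝ) (hε : 0 < ε) :
    ∃ a b c : ℝ → ℝ,
      ContDiff ℝ (⊤ : ℕ∞) a ∧ ContDiff ℝ (⊤ : ℕ∞) b ∧ ContDiff ℝ (⊤ : ℕ∞) c ∧
      (∀ t ∈ Icc (0 : ℝ) (2 * π), deriv c t = b t * deriv a t) ∧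
      (∀ t ∈ Icc (0 : ℝ) (2 * π),
        Real.sqrt ((x t - a t) ^ 2 + (y t - b t) ^ 2 + (z t - c t) ^ 2) ≤ ε) := by
  have hπ : (0:ℝ) < π := Real.pi_pos
  have hε4 : 0 < ε/4 := by positivity
  obtain ⟨P, hP⟩ := exists_polynomial_near_of_continuousOn 0 (2*π) x hx (ε/4) hε4
  obtain ⟨Q, hQ⟩ := exists_polynomial_near_of_continuousOn 0 (2*π) y hy (ε/4) hε4
  obtain ⟨R, hRz⟩ := exists_polynomial_near_of_continuousOn 0 (2*π) z hz (ε/4) hε4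
  set q : Polynomial ℝ := R.derivative - Q * P.derivative with hq_def
  obtain ⟨B1, hB1⟩ := poly_bound Q
  obtain ⟨B2, hB2⟩ := poly_bound Q.derivative
  obtain ⟨B3, hB3⟩ := poly_bound q
  obtain ⟨B4, hB4⟩ := poly_bound q.derivative
  obtain ⟨B5, hB5⟩ := poly_bound (q * P.derivative)
  set C : ℝ := 1 + |B1| + |B2| + |B3| + |B4| + |B5| with hC_def
  have habs : |B1| ≤ C ∧ |B2| ≤ C ∧ |B3| ≤ C ∧ |B4| ≤ C ∧ |B5| ≤ C := by
    refine ⟨?_, ?_, ?_, ?_, ?_⟩ <;>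
      (simp only [hC_def];
       linarith [abs_nonneg B1, abs_nonneg B2, abs_nonneg B3, abs_nonneg B4, abs_nonneg B5])
  have hC0 : 0 < C := by
    simp only [hC_def]
    linarith [abs_nonneg B1, abs_nonneg B2, abs_nonneg B3, abs_nonneg B4, abs_nonneg B5]
  have hCQ : ∀ s ∈ Icc (0:ℝ) (2*π), |Q.eval s| ≤ C :=
    fun s hs => (hB1 s hs).trans ((le_abs_self B1).trans habs.1)
  have hCQ' : ∀ s ∈ Icc (0:ℝ) (2*π), |Q.derivative.eval s| ≤ C :=
    fun s hs => (hB2 s hs).trans ((le_abs_self B2).trans habs.2.1)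
  have hCq : ∀ s ∈ Icc (0:ℝ) (2*π), |q.eval s| ≤ C :=
    fun s hs => (hB3 s hs).trans ((le_abs_self B3).trans habs.2.2.1)
  have hCq' : ∀ s ∈ Icc (0:ℝ) (2*π), |q.derivative.eval s| ≤ C :=
    fun s hs => (hB4 s hs).trans ((le_abs_self B4).trans habs.2.2.2.1)
  have hCqP : ∀ s ∈ Icc (0:ℝ) (2*π), |(q * P.derivative).eval s| ≤ C :=
    fun s hs => (hB5 s hs).trans ((le_abs_self B5).trans habs.2.2.2.2)
  set M : ℝ := max 1 ((8*C + 48*π*C)/ε) with hM_def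
  have hM1 : (1:ℝ) ≤ M := le_max_left _ _
  have hM0 : (0:ℝ) < M := lt_of_lt_of_le one_pos hM1
  have hMε : 8*C + 48*π*C ≤ M*ε := by
    have h := le_max_right 1 ((8*C + 48*π*C)/ε)
    calc 8*C + 48*π*C = ((8*C + 48*π*C)/ε)*ε := by field_simp
      _ ≤ M*ε := mul_le_mul_of_nonneg_right h hε.le
  set D : ℝ := 2*C + 2*π*C with hD_def
  have hD0 : (0:ℝ) < D := by simp only [hD_def]; positivity
  set N : ℝ := max 1 ((4*M + 12*M*D + 12*D)/ε) with hN_def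
  have hN1 : (1:ℝ) ≤ N := le_max_left _ _
  have hN0 : (0:ℝ) < N := lt_of_lt_of_le one_pos hN1
  have hNε : 4*M + 12*M*D + 12*D ≤ N*ε := by
    have h := le_max_right 1 ((4*M + 12*M*D + 12*D)/ε)
    calc 4*M + 12*M*D + 12*D = ((4*M + 12*M*D + 12*D)/ε)*ε := by field_simp
      _ ≤ N*ε := mul_le_mul_of_nonneg_right h hε.le
  set da : ℝ → ℝ := fun s => P.derivative.eval s + M * Real.cos (N*s) with hda_def
  set a : ℝ → ℝ := fun t => P.eval t + (M/N) * Real.sin (N*t) with ha_def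
  set b : ℝ → ℝ := fun s => Q.eval s + (2/M) * (q.eval s * Real.cos (N*s)) with hb_def
  set c : ℝ → ℝ := fun t => R.eval 0 + ∫ s in (0:ℝ)..t, b s * da s with hc_def
  have hda : ∀ s, HasDerivAt a (da s) s := by
    intro s
    have h1 : HasDerivAt (fun u : ℝ => Real.sin (N*u)) (Real.cos (N*s) * N) s := by
      simpa [Function.comp_def] using (Real.hasDerivAt_sin (N*s)).comp s ((hasDerivAt_id s).const_mul N)
    have h2 := (P.hasDerivAt s).add (h1.const_mul (M/N))
    have h3 : P.derivative.eval s + M / N * (Real.cos (N*s) * N) = da s := by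
      simp only [hda_def]
      field_simp
    rw [← h3]
    exact h2
  have hcont_cos : Continuous fun s : ℝ => Real.cos (N*s) :=
    Real.continuous_cos.comp (continuous_const.mul continuous_id)
  have hcont_b : Continuous b :=
    (poly_contDiff Q).continuous.add
      (continuous_const.mul ((poly_contDiff q).continuous.mul hcont_cos))
  have hcont_da : Continuous da :=
    (poly_contDiff P.derivative).continuous.add (continuous_const.mul hcont_cos)
  have hcont_bda : Continuous fun s => b s * da s := hcont_b.mul hcont_da
  have hcd : ∀ t, HasDerivAt c (b t * da t) t := fun t =>
    ((hcont_bda.integral_hasStrictDerivAt 0 t).hasDerivAt).const_add (R.eval 0)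
  have hsmooth_a : ContDiff ℝ (⊤:ℕ∞) a :=
    (poly_contDiff P).add (contDiff_const.mul ((contDiff_const.mul contDiff_id).sin))
  have hsmooth_b : ContDiff ℝ (⊤:ℕ∞) b :=
    (poly_contDiff Q).add
      (contDiff_const.mul ((poly_contDiff q).mul ((contDiff_const.mul contDiff_id).cos)))
  have hsmooth_da : ContDiff ℝ (⊤:ℕ∞) da :=
    (poly_contDiff P.derivative).add (contDiff_const.mul ((contDiff_const.mul contDiff_id).cos))
  have hsmooth_c : ContDiff ℝ (⊤:ℕ∞) c := by
    rw [contDiff_infty_iff_deriv]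
    refine ⟨fun t => (hcd t).differentiableAt, ?_⟩
    have hdc : deriv c = fun t => b t * da t := funext fun t => (hcd t).deriv
    rw [hdc]
    exact hsmooth_b.mul hsmooth_da
  refine ⟨a, b, c, hsmooth_a, hsmooth_b, hsmooth_c, ?_, ?_⟩
  · intro t _
    rw [(hcd t).deriv, (hda t).deriv]
  · intro t ht
    have ht0 : 0 ≤ t := ht.1
    have ht2 : t ≤ 2*π := ht.2
    have hsub : uIoc (0:ℝ) t ⊆ Icc (0:ℝ) (2*π) := by
      rw [uIoc_of_le ht0]
      exact fun s hs => ⟨le_of_lt hs.1, le_trans hs.2 ht2⟩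
    have hsubI : uIcc (0:ℝ) t ⊆ Icc (0:ℝ) (2*π) := by
      rw [uIcc_of_le ht0]
      exact fun s hs => ⟨hs.1, le_trans hs.2 ht2⟩
    -- key identity for c t - R.eval t
    have hint_R : ∫ s in (0:ℝ)..t, R.derivative.eval s = R.eval t - R.eval 0 :=
      intervalIntegral.integral_eq_sub_of_hasDerivAt (fun s _ => R.hasDerivAt s)
        ((poly_contDiff R.derivative).continuous.intervalIntegrable 0 t)
    have hptwise : ∀ s, b s * da s - R.derivative.eval s =
        (Polynomial.C M * Q).eval s * Real.cos (N*s)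
        + (2/M) * ((q * P.derivative).eval s * Real.cos (N*s))
        + q.eval s * Real.cos (2*N*s) := by
      intro s
      have hcos2 : Real.cos (2*N*s) = 2 * Real.cos (N*s)^2 - 1 := by
        rw [show 2*N*s = 2*(N*s) by ring, Real.cos_two_mul]
      simp only [hb_def, hda_def, hq_def, Polynomial.eval_sub, Polynomial.eval_mul,
        Polynomial.eval_C, hcos2]
      field_simp
      ring
    have hcont1 : Continuous fun s => (Polynomial.C M * Q).eval s * Real.cos (N*s) :=
      (poly_contDiff _).continuous.mul hcont_cos
    have hcont2 : Continuous fun s => (2/M) * ((q * P.derivative).eval s * Real.cos (N*s)) :=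
      continuous_const.mul ((poly_contDiff _).continuous.mul hcont_cos)
    have hcont3 : Continuous fun s => q.eval s * Real.cos (2*N*s) :=
      (poly_contDiff _).continuous.mul
        (Real.continuous_cos.comp (continuous_const.mul continuous_id))
    have hsplit : c t - R.eval t =
        (∫ s in (0:ℝ)..t, (Polynomial.C M * Q).eval s * Real.cos (N*s))
        + (∫ s in (0:ℝ)..t, (2/M) * ((q * P.derivative).eval s * Real.cos (N*s)))
        + (∫ s in (0:ℝ)..t, q.eval s * Real.cos (2*N*s)) := by
      have h1 : c t - R.eval t = ∫ s in (0:ℝ)..t, (b s * da s - R.derivative.eval s) := by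
        rw [intervalIntegral.integral_sub (hcont_bda.intervalIntegrable 0 t)
          ((poly_contDiff R.derivative).continuous.intervalIntegrable 0 t), hint_R]
        simp only [hc_def]
        ring
      rw [h1]
      simp only [hptwise]
      rw [intervalIntegral.integral_add ((hcont1.intervalIntegrable 0 t).add
        (hcont2.intervalIntegrable 0 t)) (hcont3.intervalIntegrable 0 t),
        intervalIntegral.integral_add (hcont1.intervalIntegrable 0 t)
        (hcont2.intervalIntegrable 0 t)]
    -- bounds on the three integrals
    have hI1 : |∫ s in (0:ℝ)..t, (Polynomial.C M * Q).eval s * Real.cos (N*s)|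
        ≤ (2*(M*C) + 2*π*(M*C))/N := by
      refine osc_bound _ (M*C) N hN0 ?_ ?_ t ht
      · intro s hs
        rw [Polynomial.eval_mul, Polynomial.eval_C, abs_mul, abs_of_pos hM0]
        exact mul_le_mul_of_nonneg_left (hCQ s hs) hM0.le
      · intro s hs
        rw [Polynomial.derivative_C_mul, Polynomial.eval_mul, Polynomial.eval_C, abs_mul,
          abs_of_pos hM0]
        exact mul_le_mul_of_nonneg_left (hCQ' s hs) hM0.le
    have hI3 : |∫ s in (0:ℝ)..t, q.eval s * Real.cos (2*N*s)| ≤ (2*C + 2*π*C)/(2*N) := by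
      have := osc_bound q C (2*N) (by positivity) hCq hCq' t ht
      simpa [mul_assoc] using this
    have hI2 : |∫ s in (0:ℝ)..t, (2/M) * ((q * P.derivative).eval s * Real.cos (N*s))|
        ≤ (2/M)*C*(2*π) := by
      have hbd : ∀ s ∈ uIoc (0:ℝ) t,
          ‖(2/M) * ((q * P.derivative).eval s * Real.cos (N*s))‖ ≤ (2/M)*C := by
        intro s hs
        have h1 : |(q * P.derivative).eval s| ≤ C := hCqP s (hsub hs)
        have h2 : |Real.cos (N*s)| ≤ 1 := Real.abs_cos_le_one _
        rw [Real.norm_eq_abs, abs_mul, abs_mul]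
        have hm : |(2:ℝ)/M| = 2/M := abs_of_pos (by positivity)
        rw [hm]
        calc 2/M * (|(q * P.derivative).eval s| * |Real.cos (N*s)|)
            ≤ 2/M * (C * 1) := by
              apply mul_le_mul_of_nonneg_left _ (by positivity)
              exact mul_le_mul h1 h2 (abs_nonneg _) (le_trans (abs_nonneg _) h1)
          _ = 2/M * C := by ring
      have := intervalIntegral.norm_integral_le_of_norm_le_const hbd
      rw [Real.norm_eq_abs] at this
      refine this.trans ?_
      rw [sub_zero, abs_of_nonneg ht0]
      calc 2/M*C * t ≤ 2/M*C * (2*π) := by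
            apply mul_le_mul_of_nonneg_left ht2 (by positivity)
        _ = (2/M)*C*(2*π) := by ring
    -- numerical bounds
    have hb1 : (2*(M*C) + 2*π*(M*C))/N ≤ ε/12 := by
      rw [div_le_div_iff₀ hN0 (by norm_num : (0:ℝ) < 12)]
      have : 2*(M*C) + 2*π*(M*C) = M*D := by simp only [hD_def]; ring
      rw [this]
      linarith [hNε, hM0.le, hD0.le, mul_nonneg hM0.le hD0.le]
    have hb3 : (2*C + 2*π*C)/(2*N) ≤ ε/12 := by
      rw [div_le_div_iff₀ (mul_pos two_pos hN0) (by norm_num : (0:ℝ) < 12)]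
      have : 2*C + 2*π*C = D := by simp only [hD_def]
      rw [this]
      linarith [hNε, hM0.le, hD0.le, mul_nonneg hM0.le hD0.le, mul_nonneg hN0.le hε.le]
    have hb2 : (2/M)*C*(2*π) ≤ ε/12 := by
      have heq : (2/M)*C*(2*π) = 4*π*C/M := by field_simp; ring
      rw [heq, div_le_div_iff₀ hM0 (by norm_num : (0:ℝ) < 12)]
      linarith [hMε, hC0.le, mul_nonneg hπ.le hC0.le]
    have hcR : |c t - R.eval t| ≤ ε/4 := by
      rw [hsplit]
      calc |(∫ s in (0:ℝ)..t, (Polynomial.C M * Q).eval s * Real.cos (N*s))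
          + (∫ s in (0:ℝ)..t, (2/M) * ((q * P.derivative).eval s * Real.cos (N*s)))
          + (∫ s in (0:ℝ)..t, q.eval s * Real.cos (2*N*s))|
          ≤ |(∫ s in (0:ℝ)..t, (Polynomial.C M * Q).eval s * Real.cos (N*s))
            + (∫ s in (0:ℝ)..t, (2/M) * ((q * P.derivative).eval s * Real.cos (N*s)))|
            + |∫ s in (0:ℝ)..t, q.eval s * Real.cos (2*N*s)| := abs_add_le _ _
        _ ≤ |∫ s in (0:ℝ)..t, (Polynomial.C M * Q).eval s * Real.cos (N*s)|
            + |∫ s in (0:ℝ)..t, (2/M) * ((q * P.derivative).eval s * Real.cos (N*s))|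
            + |∫ s in (0:ℝ)..t, q.eval s * Real.cos (2*N*s)| := by
              linarith [abs_add_le (∫ s in (0:ℝ)..t, (Polynomial.C M * Q).eval s * Real.cos (N*s))
                (∫ s in (0:ℝ)..t, (2/M) * ((q * P.derivative).eval s * Real.cos (N*s)))]
        _ ≤ ε/12 + ε/12 + ε/12 := by
              have := hI1.trans hb1
              have := hI2.trans hb2
              have := hI3.trans hb3
              linarith
        _ = ε/4 := by ring
    have hzc : |z t - c t| ≤ ε/2 := by
      have h1 : |z t - R.eval t| ≤ ε/4 := by
        have := hRz t ht
        rw [abs_sub_comm] at this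
        linarith [this.le]
      calc |z t - c t| = |(z t - R.eval t) - (c t - R.eval t)| := by congr 1; ring
        _ ≤ |z t - R.eval t| + |c t - R.eval t| := abs_sub _ _
        _ ≤ ε/4 + ε/4 := add_le_add h1 hcR
        _ = ε/2 := by ring
    have hxa : |x t - a t| ≤ ε/2 := by
      have h1 : |x t - P.eval t| ≤ ε/4 := by
        have := hP t ht
        rw [abs_sub_comm] at this
        linarith [this.le]
      have hMN : M/N ≤ ε/4 := by
        rw [div_le_div_iff₀ hN0 (by norm_num : (0:ℝ) < 4)]
        nlinarith [hNε, hM0.le, hD0.le, hN0.le, hε.le]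
      have h2 : |a t - P.eval t| ≤ ε/4 := by
        have : a t - P.eval t = (M/N) * Real.sin (N*t) := by simp only [ha_def]; ring
        rw [this, abs_mul, abs_of_pos (by positivity : (0:ℝ) < M/N)]
        calc M/N * |Real.sin (N*t)| ≤ M/N * 1 :=
              mul_le_mul_of_nonneg_left (Real.abs_sin_le_one _) (by positivity)
          _ = M/N := mul_one _
          _ ≤ ε/4 := hMN
      calc |x t - a t| = |(x t - P.eval t) - (a t - P.eval t)| := by congr 1; ring
        _ ≤ |x t - P.eval t| + |a t - P.eval t| := abs_sub _ _
        _ ≤ ε/4 + ε/4 := add_le_add h1 h2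
        _ = ε/2 := by ring
    have hyb : |y t - b t| ≤ ε/2 := by
      have h1 : |y t - Q.eval t| ≤ ε/4 := by
        have := hQ t ht
        rw [abs_sub_comm] at this
        linarith [this.le]
      have hCM : 2/M*C ≤ ε/4 := by
        have heq : 2/M*C = 2*C/M := by field_simp
        rw [heq, div_le_div_iff₀ hM0 (by norm_num : (0:ℝ) < 4)]
        nlinarith [hMε, hC0.le, hε.le, hπ.le]
      have h2 : |b t - Q.eval t| ≤ ε/4 := by
        have heq : b t - Q.eval t = (2/M) * (q.eval t * Real.cos (N*t)) := by
          simp only [hb_def]; ring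
        rw [heq, abs_mul, abs_of_pos (by positivity : (0:ℝ) < 2/M), abs_mul]
        calc 2/M * (|q.eval t| * |Real.cos (N*t)|) ≤ 2/M * (C * 1) := by
              apply mul_le_mul_of_nonneg_left _ (by positivity)
              exact mul_le_mul (hCq t ht) (Real.abs_cos_le_one _) (abs_nonneg _) hC0.le
          _ = 2/M*C := by ring
          _ ≤ ε/4 := hCM
      calc |y t - b t| = |(y t - Q.eval t) - (b t - Q.eval t)| := by congr 1; ring
        _ ≤ |y t - Q.eval t| + |b t - Q.eval t| := abs_sub _ _
        _ ≤ ε/4 + ε/4 := add_le_add h1 h2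
        _ = ε/2 := by ring
    clear_value a b c
    have h1 := abs_le.mp hxa
    have h2 := abs_le.mp hyb
    have h3 := abs_le.mp hzc
    have hsum : (x t - a t)^2 + (y t - b t)^2 + (z t - c t)^2 ≤ ε^2 := by
      have e1 : (x t - a t)^2 ≤ (ε/2)^2 := sq_le_sq' h1.1 h1.2
      have e2 : (y t - b t)^2 ≤ (ε/2)^2 := sq_le_sq' h2.1 h2.2
      have e3 : (z t - c t)^2 ≤ (ε/2)^2 := sq_le_sq' h3.1 h3.2
      have e4 : (0:ℝ) ≤ ε^2 := sq_nonneg ε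
      have e5 : ((ε:ℝ)/2)^2 = ε^2/4 := by ring
      rw [e5] at e1 e2 e3
      linarith
    calc Real.sqrt ((x t - a t)^2 + (y t - b t)^2 + (z t - c t)^2)
        ≤ Real.sqrt (ε^2) := Real.sqrt_le_sqrt hsum
      _ = ε := Real.sqrt_sq hε.le
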